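/- Let E be a directed graph on Fin n with diameter bound d ≥ 1, let v : Fin n → ℝ satisfy v j ≥ 0 for all j with the values v j not all equal, and let M, S : ℕ → Fin n → ℝ satisfy M 0 i = S 0 i = v i, M (t+1) i = max_{j ∈ N̄ i} M t j, and S (t+1) i = submax ({S t j | j ∈ N̄ i} ∪ {M t i, v i}) for all t and i. Then for all t ≥ 2 * d + 1 and all nodes i, S t i = submax {v j | j : Fin n}. -/

import Mathlib

open Finset Filter

noncomputable def fsMax (s : Finset ℝ) : ℝ := s.max.unbotD 0

noncomputable def fsMin (s : Finset ℝ) : ℝ := s.min.untopD 0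

noncomputable def fsSubmax (s : Finset ℝ) : ℝ := fsMax (s.filter (fun x => x < fsMax s))

/-- Agent `i` is dominating for task `q`. -/
def Dominating {n m : ℕ} (f : Fin n → Fin m → ℝ) (i : Fin n) (q : Fin m) : Prop :=
  ∀ j, f j q ≤ f i q

open Classical in
/-- Closed in-neighborhood of node `i`. -/
noncomputable def nbhd {n : ℕ} (E : Fin n → Fin n → Prop) (i : Fin n) : Finset (Fin n) :=
  insert i (Finset.univ.filter (fun j => E j i))

/-- `d` is a diameter bound for the directed graph `E`. -/
def IsDiamBound {n : ℕ} (E : Fin n → Fin n → Prop) (d : ℕ) : Prop :=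
  ∀ j i : Fin n, ∃ p ≤ d, ∃ c : ℕ → Fin n,
    c 0 = j ∧ c p = i ∧ ∀ k < p, E (c k) (c (k + 1))

lemma fsMax_eq_max' (s : Finset ℝ) (h : s.Nonempty) : fsMax s = s.max' h := by
  rw [fsMax, ← Finset.coe_max' h, WithBot.unbotD_coe]

lemma fsMax_mem {s : Finset ℝ} (h : s.Nonempty) : fsMax s ∈ s := by
  rw [fsMax_eq_max' s h]; exact s.max'_mem h

lemma le_fsMax {s : Finset ℝ} {x : ℝ} (hx : x ∈ s) : x ≤ fsMax s := by
  rw [fsMax_eq_max' s ⟨x, hx⟩]; exact Finset.le_max' s x hx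

lemma fsMax_le {s : Finset ℝ} {b : ℝ} (hb : 0 ≤ b) (h : ∀ x ∈ s, x ≤ b) : fsMax s ≤ b := by
  rcases s.eq_empty_or_nonempty with rfl | hs
  · simpa [fsMax] using hb
  · rw [fsMax_eq_max' s hs]; exact Finset.max'_le s hs b h

lemma le_fsSubmax {s : Finset ℝ} {x : ℝ} (hx : x ∈ s) (hlt : x < fsMax s) :
    x ≤ fsSubmax s :=
  le_fsMax (Finset.mem_filter.2 ⟨hx, hlt⟩)

lemma fsSubmax_le {s : Finset ℝ} {b : ℝ} (hb : 0 ≤ b)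
    (h : ∀ x ∈ s, x < fsMax s → x ≤ b) : fsSubmax s ≤ b :=
  fsMax_le hb (fun x hx => h x (Finset.mem_filter.1 hx).1 (Finset.mem_filter.1 hx).2)

lemma fsSubmax_cases (s : Finset ℝ) :
    (fsSubmax s ∈ s ∧ fsSubmax s < fsMax s) ∨ fsSubmax s = 0 := by
  rcases (s.filter (fun x => x < fsMax s)).eq_empty_or_nonempty with he | hne
  · right; rw [fsSubmax, he]; simp [fsMax]
  · left
    have := fsMax_mem hne
    rw [Finset.mem_filter] at this
    exact this

theorem submax_consensus {n : ℕ} (hn : 1 ≤ n) (E : Fin n → Fin n → Prop)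
    (d : ℕ) (hd : 1 ≤ d) (hdiam : IsDiamBound E d)
    (v : Fin n → ℝ) (hv : ∀ j, 0 ≤ v j) (hne : ∃ j k : Fin n, v j ≠ v k)
    (M S : ℕ → Fin n → ℝ)
    (hM0 : ∀ i, M 0 i = v i) (hS0 : ∀ i, S 0 i = v i)
    (hMs : ∀ t i, M (t + 1) i = fsMax ((nbhd E i).image (M t)))
    (hSs : ∀ t i, S (t + 1) i =
      fsSubmax (((nbhd E i).image (S t)) ∪ {M t i, v i})) :
    ∀ t, 2 * d + 1 ≤ t → ∀ i, S t i = fsSubmax (Finset.univ.image v) := by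
  classical
  set Vmax := fsMax (Finset.univ.image v) with hVmaxdef
  set Vsub := fsSubmax (Finset.univ.image v) with hVsubdef
  have hvle : ∀ j, v j ≤ Vmax := fun j => le_fsMax (mem_image_of_mem v (mem_univ j))
  have hvmem : ∀ j, v j ∈ Finset.univ.image v := fun j => mem_image_of_mem v (mem_univ j)
  -- a maximizer
  have hnen : Nonempty (Fin n) := Fin.pos_iff_nonempty.mp hn
  haveI := hnen
  obtain ⟨jm, -, hjm⟩ := Finset.mem_image.1 (fsMax_mem ((Finset.univ_nonempty (α := Fin n)).image v))
  -- some value below Vmax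
  obtain ⟨j0, k0, hjk⟩ := hne
  have hxlt : ∃ x ∈ Finset.univ.image v, x < Vmax := by
    by_cases h : v j0 < Vmax
    · exact ⟨v j0, hvmem j0, h⟩
    · refine ⟨v k0, hvmem k0, ?_⟩
      have hj : v j0 = Vmax := le_antisymm (hvle j0) (not_lt.1 h)
      rcases lt_or_eq_of_le (hvle k0) with h' | h'
      · exact h'
      · exact absurd (hj.trans h'.symm) hjk
  obtain ⟨x0, hx0m, hx0lt⟩ := hxlt
  have hfne : ((Finset.univ.image v).filter (fun x => x < Vmax)).Nonempty :=
    ⟨x0, Finset.mem_filter.2 ⟨hx0m, hx0lt⟩⟩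
  have hVsub_mem : Vsub ∈ (Finset.univ.image v).filter (fun x => x < Vmax) := fsMax_mem hfne
  rw [Finset.mem_filter] at hVsub_mem
  obtain ⟨istar, -, histar⟩ := Finset.mem_image.1 hVsub_mem.1
  have hVsublt : Vsub < Vmax := hVsub_mem.2
  have hVsub0 : 0 ≤ Vsub := histar ▸ hv istar
  have hVmax0 : 0 < Vmax := lt_of_le_of_lt hVsub0 hVsublt
  have hvVsub : ∀ j, v j < Vmax → v j ≤ Vsub := fun j h => le_fsSubmax (hvmem j) h
  -- nbhd facts
  have hself : ∀ i, i ∈ nbhd E i := fun i => Finset.mem_insert_self _ _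
  have hedge : ∀ {j i}, E j i → j ∈ nbhd E i := fun h =>
    Finset.mem_insert_of_mem (Finset.mem_filter.2 ⟨mem_univ _, h⟩)
  -- M facts
  have hM_mem : ∀ t i, M t i ∈ Finset.univ.image v := by
    intro t
    induction t with
    | zero => intro i; rw [hM0]; exact hvmem i
    | succ t ih =>
      intro i
      rw [hMs]
      have hmem : fsMax ((nbhd E i).image (M t)) ∈ (nbhd E i).image (M t) :=
        fsMax_mem ⟨M t i, mem_image_of_mem _ (hself i)⟩
      obtain ⟨j, -, hj⟩ := Finset.mem_image.1 hmem
      rw [← hj]; exact ih j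
  have hMle : ∀ t i, M t i ≤ Vmax := fun t i => le_fsMax (hM_mem t i)
  have hMstep : ∀ t i j, j ∈ nbhd E i → M t j ≤ M (t+1) i := fun t i j hj => by
    rw [hMs]; exact le_fsMax (mem_image_of_mem _ hj)
  have hMmono : ∀ s t i, s ≤ t → M s i ≤ M t i := by
    intro s t
    induction t with
    | zero => intro i h; rw [Nat.le_zero.1 h]
    | succ t ih =>
      intro i h
      rcases Nat.eq_or_lt_of_le h with rfl | h'
      · rfl
      · exact (ih i (Nat.lt_succ_iff.1 h')).trans (hMstep t i i (hself i))
  have hMpath : ∀ p (c : ℕ → Fin n), (∀ k < p, E (c k) (c (k+1))) → v (c 0) ≤ M p (c p) := by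
    intro p
    induction p with
    | zero => intro c _; rw [hM0]
    | succ p ih =>
      intro c hc
      exact (ih c (fun k hk => hc k (Nat.lt_succ_of_lt hk))).trans
        (hMstep p (c (p+1)) (c p) (hedge (hc p (Nat.lt_succ_self p))))
  have hMd : ∀ t i, d ≤ t → M t i = Vmax := by
    intro t i ht
    refine le_antisymm (hMle t i) ?_
    obtain ⟨p, hp, c, hc0, hcp, hce⟩ := hdiam jm i
    have h1 := hMpath p c hce
    rw [hc0, hcp, hjm] at h1
    exact h1.trans (hMmono p t i (hp.trans ht))
  -- S facts
  have hS_mem : ∀ t i, S t i ∈ Finset.univ.image v ∨ S t i = 0 := by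
    intro t
    induction t with
    | zero => intro i; left; rw [hS0]; exact hvmem i
    | succ t ih =>
      intro i
      rw [hSs]
      rcases fsSubmax_cases (((nbhd E i).image (S t)) ∪ {M t i, v i}) with ⟨hmem, -⟩ | h0
      · rcases Finset.mem_union.1 hmem with h | h
        · obtain ⟨j, -, hj⟩ := Finset.mem_image.1 h
          rw [← hj]; exact ih j
        · rcases Finset.mem_insert.1 h with h | h
          · rw [h]; left; exact hM_mem t i
          · rw [Finset.mem_singleton.1 h]; left; exact hvmem i
      · right; exact h0
  have hSleVmax : ∀ t i, S t i ≤ Vmax := by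
    intro t i
    rcases hS_mem t i with h | h
    · exact le_fsMax h
    · rw [h]; exact hVmax0.le
  have hAle : ∀ t i, ∀ x ∈ ((nbhd E i).image (S t)) ∪ {M t i, v i}, x ≤ Vmax := by
    intro t i x hx
    rcases Finset.mem_union.1 hx with h | h
    · obtain ⟨j, -, hj⟩ := Finset.mem_image.1 h
      rw [← hj]; exact hSleVmax t j
    · rcases Finset.mem_insert.1 h with h | h
      · rw [h]; exact hMle t i
      · rw [Finset.mem_singleton.1 h]; exact hvle i
  have hAmax : ∀ t i, d ≤ t → fsMax (((nbhd E i).image (S t)) ∪ {M t i, v i}) = Vmax := by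
    intro t i ht
    refine le_antisymm (fsMax_le hVmax0.le (hAle t i)) ?_
    have hmem : M t i ∈ ((nbhd E i).image (S t)) ∪ {M t i, v i} :=
      Finset.mem_union_right _ (Finset.mem_insert_self _ _)
    exact le_of_eq_of_le (hMd t i ht).symm (le_fsMax hmem)
  have hSlt : ∀ t i, 1 ≤ t → S t i < Vmax := by
    intro t i ht
    obtain ⟨t', rfl⟩ : ∃ t', t = t' + 1 := ⟨t - 1, by omega⟩
    rw [hSs]
    rcases fsSubmax_cases (((nbhd E i).image (S t')) ∪ {M t' i, v i}) with ⟨-, hlt⟩ | h0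
    · exact lt_of_lt_of_le hlt (fsMax_le hVmax0.le (hAle t' i))
    · rw [h0]; exact hVmax0
  have hSleVsub : ∀ t i, 1 ≤ t → S t i ≤ Vsub := by
    intro t i ht
    rcases hS_mem t i with h | h
    · exact le_fsSubmax h (hSlt t i ht)
    · rw [h]; exact hVsub0
  have hSstep : ∀ t i x, d ≤ t → x ∈ ((nbhd E i).image (S t)) ∪ {M t i, v i} →
      x < Vmax → x ≤ S (t+1) i := by
    intro t i x ht hx hlt
    rw [hSs]
    exact le_fsSubmax hx (by rw [hAmax t i ht]; exact hlt)
  have hSstar : ∀ t, d + 1 ≤ t → S t istar = Vsub := by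
    intro t ht
    obtain ⟨t', rfl⟩ : ∃ t', t = t' + 1 := ⟨t - 1, by omega⟩
    refine le_antisymm (hSleVsub _ _ (by omega)) ?_
    have hmem : v istar ∈ ((nbhd E istar).image (S t')) ∪ {M t' istar, v istar} :=
      Finset.mem_union_right _ (Finset.mem_insert_of_mem (Finset.mem_singleton_self _))
    have := hSstep t' istar (v istar) (by omega) hmem (by rw [histar]; exact hVsublt)
    rwa [histar] at this
  have hpath : ∀ p (c : ℕ → Fin n), c 0 = istar → (∀ k < p, E (c k) (c (k+1))) →
      ∀ k, k ≤ p → ∀ t, d + 1 + k ≤ t → S t (c k) = Vsub := by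
    intro p c hc0 hce k
    induction k with
    | zero => intro _ t ht; rw [hc0]; exact hSstar t (by omega)
    | succ k ih =>
      intro hk t ht
      obtain ⟨t', rfl⟩ : ∃ t', t = t' + 1 := ⟨t - 1, by omega⟩
      refine le_antisymm (hSleVsub _ _ (by omega)) ?_
      have hIH : S t' (c k) = Vsub := ih (by omega) t' (by omega)
      have hmem : S t' (c k) ∈ ((nbhd E (c (k+1))).image (S t')) ∪ {M t' (c (k+1)), v (c (k+1))} :=
        Finset.mem_union_left _ (mem_image_of_mem _ (hedge (hce k (by omega))))
      have := hSstep t' (c (k+1)) (S t' (c k)) (by omega) hmem (by rw [hIH]; exact hVsublt)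
      rwa [hIH] at this
  intro t ht i
  obtain ⟨p, hp, c, hc0, hcp, hce⟩ := hdiam istar i
  have := hpath p c hc0 hce p le_rfl t (by omega)
  rwa [hcp] at this
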